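/- arXiv:2605.08579 — 2 statements merged into one kernel-verified Lean document; each statement's English description precedes it below -/
import Mathlib

section
/- Let A be an Artinian module over a Noetherian local ring R. Then the set of minimal elements of the attached primes of A equals the set of minimal primes over the annihilator of A. In particular, A is nonzero if and only if its set of attached primes is nonempty. -/
universe u

noncomputable section

/-- Krull dimension of a module: the Krull dimension of `R` modulo the annihilator of `M`. -/
def moduleDim (R : Type*) [CommRing R] (M : Type*) [AddCommGroup M] [Module R M] :
    WithBot (WithTop ℕ) :=
  ringKrullDim (R ⧸ Module.annihilator R M)

/-- Depth of a module `M` relative to an ideal `I`: the supremum of the lengths of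
regular sequences on `M` consisting of elements of `I`. -/
def depthIn (R : Type*) [CommRing R] (I : Ideal R) (M : Type*) [AddCommGroup M]
    [Module R M] : ℕ∞ :=
  sSup {n : ℕ∞ | ∃ rs : List R, (rs.length : ℕ∞) = n ∧ (∀ r ∈ rs, r ∈ I) ∧
    RingTheory.Sequence.IsRegular M rs}

/-- A (Noetherian local) ring is Cohen-Macaulay if it is Noetherian, local, and its depth
equals its Krull dimension. -/
def IsCMLocalRing (A : Type*) [CommRing A] : Prop :=
  IsNoetherianRing A ∧ ∃ _h : IsLocalRing A,
    letI := _h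
    (depthIn A (IsLocalRing.maximalIdeal A) A : WithBot ℕ∞) = ringKrullDim A

/-- A module over a local ring is Cohen-Macaulay if it is zero or its depth equals
its dimension. -/
def IsCMModule (R : Type*) [CommRing R] [IsLocalRing R] (M : Type*) [AddCommGroup M]
    [Module R M] : Prop :=
  Subsingleton M ∨ (depthIn R (IsLocalRing.maximalIdeal R) M : WithBot ℕ∞) = moduleDim R M

/-- The non-Cohen-Macaulay locus of a module, as a set of prime ideals. -/
def nCMLocus (R : Type*) [CommRing R] (M : Type*) [AddCommGroup M] [Module R M] :
    Set (Ideal R) :=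
  {p | ∃ h : p.IsPrime,
    letI := h
    ¬ IsCMModule (Localization.AtPrime p) (LocalizedModule p.primeCompl M)}

/-- The support of a module, as a set of prime ideals. -/
def suppSet (R : Type*) [CommRing R] (M : Type*) [AddCommGroup M] [Module R M] :
    Set (Ideal R) :=
  {p | ∃ h : p.IsPrime,
    letI := h
    Nontrivial (LocalizedModule p.primeCompl M)}

/-- The dimension of a set of primes: the supremum of `dim R/p`. -/
def locusDim (R : Type*) [CommRing R] (s : Set (Ideal R)) : WithBot (WithTop ℕ) :=
  sSup ((fun p => ringKrullDim (R ⧸ p)) '' s)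

/-- The subset of `Spec R` corresponding to a set of prime ideals. -/
def zariskiSet (R : Type*) [CommRing R] (s : Set (Ideal R)) : Set (PrimeSpectrum R) :=
  {x | x.asIdeal ∈ s}

/-- A module is `p`-secondary if it is nonzero, `p` is the radical of its annihilator, and
every ring element acts either surjectively or nilpotently. -/
def IsSecondary (R : Type*) [CommRing R] (M : Type*) [AddCommGroup M] [Module R M]
    (p : Ideal R) : Prop :=
  Nontrivial M ∧ p = (Module.annihilator R M).radical ∧
    ∀ r : R, Function.Surjective (fun m : M => r • m) ∨ r ∈ (Module.annihilator R M).radical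

/-- The attached primes of a module: primes `p` such that some quotient of `M`
is `p`-secondary. -/
def attachedPrimes (R : Type*) [CommRing R] (M : Type*) [AddCommGroup M] [Module R M] :
    Set (Ideal R) :=
  {p | p.IsPrime ∧ ∃ N : Submodule R M, IsSecondary R (M ⧸ N) p}

/-- The `m`-adic completion of a local ring. -/
abbrev completionRing (R : Type u) [CommRing R] [IsLocalRing R] : Type u :=
  AdicCompletion (IsLocalRing.maximalIdeal R) R

/-- `R/p` is unmixed: all associated primes of its completion have the same dimension
`dim R/p`. -/
def IsUnmixed (R : Type u) [CommRing R] [IsLocalRing R] (p : Ideal R) : Prop :=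
  ∀ P ∈ associatedPrimes (completionRing R)
      ((completionRing R) ⧸ p.map (algebraMap R (completionRing R))),
    ringKrullDim ((completionRing R) ⧸ P) = ringKrullDim (R ⧸ p)

/-- The formal fiber of `R` at `p` is Cohen-Macaulay: for every prime `P` of the completion
lying over `p`, the local ring `R̂_P / p R̂_P` is Cohen-Macaulay. -/
def HasCMFormalFiberAt (R : Type u) [CommRing R] [IsLocalRing R] (p : Ideal R) : Prop :=
  ∀ (P : Ideal (completionRing R)) (hP : P.IsPrime),
    P.comap (algebraMap R (completionRing R)) = p →
    letI := hP
    IsCMLocalRing ((Localization.AtPrime P) ⧸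
      p.map ((algebraMap (completionRing R) (Localization.AtPrime P)).comp
        (algebraMap R (completionRing R))))

/-- The ideal `a(M) = a_0(M) ⋯ a_{d-1}(M)`, the product of the annihilators of the local
cohomology modules `H^i_m(M)` for `i < d`. -/
def aIdeal (R : Type u) [CommRing R] [IsLocalRing R] (M : Type u) [AddCommGroup M]
    [Module R M] (d : ℕ) : Ideal R :=
  ∏ i ∈ Finset.range d,
    Module.annihilator R
      ((localCohomology (IsLocalRing.maximalIdeal R) i).obj (ModuleCat.of R M))

/-- A chain is saturated if nothing can be inserted between consecutive elements. -/
def IsSaturatedChain {α : Type*} [Preorder α] (c : LTSeries α) : Prop :=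
  ∀ i : Fin c.length, ∀ x : α, ¬ (c i.castSucc < x ∧ x < c i.succ)

/-- A ring is catenary if any two saturated chains of primes with the same endpoints
have the same length. -/
def IsCatenaryRing (A : Type*) [CommRing A] : Prop :=
  ∀ c₁ c₂ : LTSeries (PrimeSpectrum A),
    c₁.head = c₂.head → c₁.last = c₂.last →
    IsSaturatedChain c₁ → IsSaturatedChain c₂ → c₁.length = c₂.length

end
section SecondaryAux

variable {R : Type u} [CommRing R] {A : Type u} [AddCommGroup A] [Module R A]

open Submodule

open scoped Classical

/-- scalar multiplication as a linear map -/
private def lsm (R : Type u) [CommRing R] {A : Type u} [AddCommGroup A] [Module R A]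
    (r : R) : A →ₗ[R] A := LinearMap.lsmul R A r

private lemma lsm_apply (r : R) (a : A) : lsm R r a = r • a := rfl

private lemma map_lsm_le (r : R) (X : Submodule R A) : X.map (lsm R r) ≤ X := by
  rintro _ ⟨x, hx, rfl⟩; exact X.smul_mem r hx

private lemma map_lsm_mul (r s : R) (X : Submodule R A) :
    X.map (lsm R (r * s)) = (X.map (lsm R s)).map (lsm R r) := by
  rw [← Submodule.map_comp]
  congr 1
  ext a
  simp [lsm, mul_smul, smul_comm r s]

private lemma map_lsm_one (X : Submodule R A) : X.map (lsm R (1 : R)) = X := by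
  have h : lsm R (1 : R) = (LinearMap.id : A →ₗ[R] A) := by
    ext a; simp [lsm]
  rw [h, Submodule.map_id]

private lemma map_lsm_pow_eq_self {r : R} {X : Submodule R A}
    (h : X.map (lsm R r) = X) : ∀ n : ℕ, X.map (lsm R (r ^ n)) = X := by
  intro n
  induction n with
  | zero => simpa using map_lsm_one X
  | succ n ih => rw [pow_succ, map_lsm_mul, h, ih]

private lemma map_lsm_pow_anti {r : R} (X : Submodule R A) {a b : ℕ} (hab : a ≤ b) :
    X.map (lsm R (r ^ b)) ≤ X.map (lsm R (r ^ a)) := by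
  obtain ⟨c, rfl⟩ := Nat.exists_eq_add_of_le hab
  rw [pow_add, map_lsm_mul]
  exact Submodule.map_mono (map_lsm_le _ _)

/-- A submodule is secondary: nonzero, and each scalar acts surjectively or nilpotently. -/
private def IsSec (X : Submodule R A) : Prop :=
  X ≠ ⊥ ∧ ∀ r : R, X.map (lsm R r) = X ∨ r ∈ X.annihilator.radical

private lemma isSec_of_irreducible [IsArtinian R A] (X : Submodule R A) (hX : X ≠ ⊥)
    (hirr : ∀ Y Z : Submodule R A, Y ≤ X → Z ≤ X → Y ⊔ Z = X → Y = X ∨ Z = X) :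
    IsSec X := by
  refine ⟨hX, fun r => ?_⟩
  by_cases h : X.map (lsm R r) = X
  · exact Or.inl h
  right
  obtain ⟨n, hn⟩ := IsArtinian.monotone_stabilizes (R := R) (M := A)
    ⟨fun k => OrderDual.toDual (X.map (lsm R (r ^ (k + 1)))),
      fun a b hab => OrderDual.toDual_le_toDual.mpr (map_lsm_pow_anti X (by omega))⟩
  set k := n + 1 with hk
  have hBB : X.map (lsm R (r ^ (2 * k))) = X.map (lsm R (r ^ k)) := by
    have := hn (2 * n + 1) (by omega)
    have h2 : (2 * n + 1) + 1 = 2 * k := by omega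
    have h3 : X.map (lsm R (r ^ (2 * n + 1 + 1))) = X.map (lsm R (r ^ k)) :=
      congrArg OrderDual.ofDual this.symm
    rw [h2] at h3
    exact h3
  set B := X.map (lsm R (r ^ k)) with hB
  set C := X ⊓ LinearMap.ker (lsm R (r ^ k)) with hC
  have hBle : B ≤ X := map_lsm_le _ _
  have hCle : C ≤ X := inf_le_left
  have hsup : B ⊔ C = X := by
    refine le_antisymm (sup_le hBle hCle) ?_
    intro x hx
    have hx1 : (r ^ k) • x ∈ X.map (lsm R (r ^ (2 * k))) := by
      rw [hBB]
      exact ⟨x, hx, rfl⟩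
    obtain ⟨y, hy, hyy⟩ := hx1
    have hyy' : (r ^ (2 * k)) • y = (r ^ k) • x := hyy
    have hxy : x = (r ^ k) • y + (x - (r ^ k) • y) := by abel
    rw [hxy]
    refine Submodule.add_mem_sup ⟨y, hy, rfl⟩ ⟨Submodule.sub_mem X hx (X.smul_mem _ hy), ?_⟩
    show (r ^ k) • (x - (r ^ k) • y) = 0
    rw [smul_sub, smul_smul, ← pow_add]
    have : k + k = 2 * k := by omega
    rw [this, hyy', sub_self]
  rcases hirr B C hBle hCle hsup with hBX | hCX
  · exfalso
    apply h
    refine le_antisymm (map_lsm_le _ _) ?_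
    calc X = B := hBX.symm
    _ ≤ X.map (lsm R (r ^ 1)) := map_lsm_pow_anti X (by omega)
    _ = X.map (lsm R r) := by rw [pow_one]
  · refine ⟨k, ?_⟩
    rw [Submodule.mem_annihilator]
    intro x hx
    have : x ∈ C := hCX ▸ hx
    exact this.2

private lemma exists_sec_decomp [IsArtinian R A] (X : Submodule R A) :
    ∃ T : Finset (Submodule R A), (∀ Y ∈ T, IsSec Y) ∧ T.sup id = X := by
  induction X using WellFoundedLT.induction with
  | ind X IH =>
    by_cases hbot : X = ⊥
    · exact ⟨∅, by simp, by simp [hbot]⟩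
    by_cases hirr : ∀ Y Z : Submodule R A, Y ≤ X → Z ≤ X → Y ⊔ Z = X → Y = X ∨ Z = X
    · exact ⟨{X}, by simpa using isSec_of_irreducible X hbot hirr, by simp⟩
    push_neg at hirr
    obtain ⟨Y, Z, hY, hZ, hYZ, hY', hZ'⟩ := hirr
    obtain ⟨T₁, hT₁, hT₁'⟩ := IH Y (lt_of_le_of_ne hY hY')
    obtain ⟨T₂, hT₂, hT₂'⟩ := IH Z (lt_of_le_of_ne hZ hZ')
    refine ⟨T₁ ∪ T₂, ?_, ?_⟩
    · intro W hW
      rcases Finset.mem_union.mp hW with h | h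
      · exact hT₁ W h
      · exact hT₂ W h
    · rw [Finset.sup_union, hT₁', hT₂', hYZ]

private lemma exists_min_sec_decomp [IsArtinian R A] :
    ∃ T : Finset (Submodule R A), (∀ Y ∈ T, IsSec Y) ∧ T.sup id = ⊤ ∧
      ∀ X ∈ T, ¬ X ≤ ((T.erase X).sup id) := by
  have hex : ∃ n : ℕ, ∃ T : Finset (Submodule R A),
      T.card = n ∧ (∀ Y ∈ T, IsSec Y) ∧ T.sup id = ⊤ := by
    obtain ⟨T, h1, h2⟩ := exists_sec_decomp (⊤ : Submodule R A)
    exact ⟨T.card, T, rfl, h1, h2⟩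
  obtain ⟨T, hcard, hsec, hsup⟩ := Nat.find_spec hex
  refine ⟨T, hsec, hsup, ?_⟩
  intro X hX hle
  have herased : (T.erase X).sup id = ⊤ := by
    have h1 : T.sup id = X ⊔ (T.erase X).sup id := by
      conv_lhs => rw [← Finset.insert_erase hX]
      rw [Finset.sup_insert]
      rfl
    have : (⊤ : Submodule R A) ≤ (T.erase X).sup id := by
      rw [← hsup, h1]
      exact sup_le hle le_rfl
    exact top_le_iff.mp this
  have hlt : (T.erase X).card < Nat.find hex := by
    rw [← hcard]
    exact Finset.card_erase_lt_of_mem hX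
  exact Nat.find_min hex hlt ⟨T.erase X, rfl,
    fun Y hY => hsec Y (Finset.mem_of_mem_erase hY), herased⟩

private lemma isSec_radical_prime {X : Submodule R A} (h : IsSec X) :
    X.annihilator.radical.IsPrime := by
  constructor
  · intro htop
    apply h.1
    have h1 : (1 : R) ∈ X.annihilator.radical := htop ▸ Submodule.mem_top
    obtain ⟨m, hm⟩ := h1
    rw [one_pow, Submodule.mem_annihilator] at hm
    rw [eq_bot_iff]
    intro x hx
    simpa using (one_smul R x) ▸ hm x hx
  · intro r s hrs
    by_contra hcon
    push_neg at hcon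
    obtain ⟨hr, hs⟩ := hcon
    have hrX : X.map (lsm R r) = X := (h.2 r).resolve_right hr
    have hsX : X.map (lsm R s) = X := (h.2 s).resolve_right hs
    have hrsX : X.map (lsm R (r * s)) = X := by rw [map_lsm_mul, hsX, hrX]
    obtain ⟨m, hm⟩ := hrs
    apply h.1
    have hXeq : X.map (lsm R ((r * s) ^ m)) = X := map_lsm_pow_eq_self hrsX m
    rw [eq_bot_iff, ← hXeq]
    rintro _ ⟨x, hx, rfl⟩
    have := Submodule.mem_annihilator.mp hm x hx
    simpa [lsm_apply] using this

private lemma finset_inf_ann_le (T : Finset (Submodule R A)) :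
    (T.inf fun X => X.annihilator) ≤ (T.sup id).annihilator := by
  intro r hr
  rw [Submodule.mem_annihilator]
  intro a ha
  have hker : T.sup id ≤ LinearMap.ker (lsm R r) := by
    apply Finset.sup_le
    intro X hX x hx
    have h1 : (T.inf fun X => X.annihilator) ≤ X.annihilator := Finset.inf_le hX
    exact Submodule.mem_annihilator.mp (h1 hr) x hx
  exact hker ha

/-- surjectivity of scalar action passes to powers -/
private lemma surj_pow {M : Type u} [AddCommGroup M] [Module R M] {r : R}
    (h : Function.Surjective (fun m : M => r • m)) (n : ℕ) :
    Function.Surjective (fun m : M => (r ^ n) • m) := by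
  induction n with
  | zero => intro q; exact ⟨q, by simp⟩
  | succ n ih =>
    intro q
    obtain ⟨q₁, hq₁⟩ := h q
    obtain ⟨q₂, hq₂⟩ := ih q₁
    refine ⟨q₂, ?_⟩
    show (r ^ (n + 1)) • q₂ = q
    rw [pow_succ', mul_smul]
    simp only at hq₁ hq₂
    rw [hq₂, hq₁]

private lemma quotient_secondary (T : Finset (Submodule R A))
    (hsec : ∀ Y ∈ T, IsSec Y) (hsup : T.sup id = ⊤) (X : Submodule R A) (hX : X ∈ T)
    (hnred : ¬ X ≤ ((T.erase X).sup id)) :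
    IsSecondary R (A ⧸ ((T.erase X).sup id)) X.annihilator.radical := by
  set N := (T.erase X).sup id with hN
  have hXsec : IsSec X := hsec X hX
  have hXN : X ⊔ N = ⊤ := by
    rw [← hsup]
    conv_rhs => rw [← Finset.insert_erase hX]
    rw [Finset.sup_insert]
    rfl
  -- every class in the quotient is represented by an element of X
  have hrepr : ∀ a : A, ∃ x ∈ X,
      (Submodule.Quotient.mk a : A ⧸ N) = Submodule.Quotient.mk x := by
    intro a
    have ha : a ∈ X ⊔ N := hXN ▸ Submodule.mem_top
    obtain ⟨x, hx, y, hy, hxy⟩ := Submodule.mem_sup.mp ha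
    refine ⟨x, hx, ?_⟩
    rw [Submodule.Quotient.eq]
    rw [← hxy]
    simpa using hy
  -- nontriviality
  have hnontriv : Nontrivial (A ⧸ N) := by
    obtain ⟨x, hx, hxN⟩ := SetLike.not_le_iff_exists.mp hnred
    refine ⟨⟨Submodule.Quotient.mk x, 0, ?_⟩⟩
    intro hcon
    exact hxN ((Submodule.Quotient.mk_eq_zero N).mp hcon)
  -- surjectivity for r outside the radical
  have hsurj : ∀ r : R, r ∉ X.annihilator.radical →
      Function.Surjective (fun q : A ⧸ N => r • q) := by
    intro r hr q
    obtain ⟨a, rfl⟩ := Submodule.Quotient.mk_surjective N q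
    obtain ⟨x, hx, hax⟩ := hrepr a
    have hmap : X.map (lsm R r) = X := (hXsec.2 r).resolve_right hr
    have hx' : x ∈ X.map (lsm R r) := by rw [hmap]; exact hx
    obtain ⟨x', hx', hxx'⟩ := hx'
    refine ⟨Submodule.Quotient.mk x', ?_⟩
    show r • (Submodule.Quotient.mk x' : A ⧸ N) = Submodule.Quotient.mk a
    rw [← Submodule.Quotient.mk_smul, hax]
    exact congrArg Submodule.Quotient.mk hxx'
  -- inclusion of radicals, forward
  have hsub1 : X.annihilator.radical ≤ (Module.annihilator R (A ⧸ N)).radical := by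
    intro r hr
    obtain ⟨m, hm⟩ := hr
    refine ⟨m, ?_⟩
    rw [Module.mem_annihilator]
    intro q
    obtain ⟨a, rfl⟩ := Submodule.Quotient.mk_surjective N q
    obtain ⟨x, hx, hax⟩ := hrepr a
    rw [hax, ← Submodule.Quotient.mk_smul,
      Submodule.mem_annihilator.mp hm x hx, Submodule.Quotient.mk_zero]
  -- inclusion of radicals, backward
  have hsub2 : (Module.annihilator R (A ⧸ N)).radical ≤ X.annihilator.radical := by
    intro r hr
    by_contra hcon
    obtain ⟨m, hm⟩ := hr
    rw [Module.mem_annihilator] at hm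
    have hs := surj_pow (hsurj r hcon) m
    obtain ⟨q₁, q₂, hq⟩ := hnontriv
    apply hq
    obtain ⟨q₁', hq₁⟩ := hs q₁
    obtain ⟨q₂', hq₂⟩ := hs q₂
    simp only at hq₁ hq₂
    rw [← hq₁, ← hq₂, hm q₁', hm q₂']
  refine ⟨hnontriv, le_antisymm hsub1 hsub2, ?_⟩
  intro r
  by_cases hr : r ∈ X.annihilator.radical
  · exact Or.inr (hsub1 hr)
  · exact Or.inl (hsurj r hr)

private lemma mem_attached_of_minimalPrime [IsArtinian R A] {p : Ideal R}
    (hp : p ∈ (Module.annihilator R A).minimalPrimes) : p ∈ attachedPrimes R A := by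
  obtain ⟨T, hsec, hsup, hnred⟩ := exists_min_sec_decomp (R := R) (A := A)
  have hpprime : p.IsPrime := hp.1.1
  have hIle : Module.annihilator R A ≤ p := hp.1.2
  have hinfle : (T.inf fun X => X.annihilator) ≤ p := by
    refine le_trans (finset_inf_ann_le T) ?_
    rw [hsup, Submodule.annihilator_top]
    exact hIle
  obtain ⟨X, hXT, hXle⟩ := (hpprime.inf_le').mp hinfle
  have hXsec := hsec X hXT
  have hprime : X.annihilator.radical.IsPrime := isSec_radical_prime hXsec
  have hIX : Module.annihilator R A ≤ X.annihilator.radical := by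
    refine le_trans ?_ Ideal.le_radical
    rw [← Submodule.annihilator_top]
    exact Submodule.annihilator_mono le_top
  have hradle : X.annihilator.radical ≤ p := by
    have := Ideal.radical_mono hXle
    rwa [hpprime.radical] at this
  have hpeq : p = X.annihilator.radical :=
    le_antisymm (hp.2 ⟨hprime, hIX⟩ hradle) hradle
  refine ⟨hpprime, (T.erase X).sup id, ?_⟩
  rw [hpeq]
  exact quotient_secondary T hsec hsup X hXT (hnred X hXT)

private lemma annihilator_le_of_attached {p : Ideal R} (hp : p ∈ attachedPrimes R A) :
    Module.annihilator R A ≤ p := by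
  obtain ⟨hprime, N, hnt, hrad, _⟩ := hp
  rw [hrad]
  refine le_trans ?_ Ideal.le_radical
  intro r hr
  rw [Module.mem_annihilator] at hr ⊢
  intro q
  obtain ⟨a, rfl⟩ := Submodule.Quotient.mk_surjective N q
  rw [← Submodule.Quotient.mk_smul, hr a, Submodule.Quotient.mk_zero]

private lemma nontrivial_of_attached {p : Ideal R} (hp : p ∈ attachedPrimes R A) :
    Nontrivial A := by
  obtain ⟨hprime, N, hnt, _, _⟩ := hp
  obtain ⟨q₁, q₂, hq⟩ := hnt
  obtain ⟨a₁, rfl⟩ := Submodule.Quotient.mk_surjective N q₁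
  obtain ⟨a₂, rfl⟩ := Submodule.Quotient.mk_surjective N q₂
  exact ⟨a₁, a₂, fun h => hq (by rw [h])⟩

end SecondaryAux

theorem minimal_attachedPrimes_eq_minimalPrimes_annihilator
    (R : Type u) [CommRing R] [IsNoetherianRing R] [IsLocalRing R]
    (A : Type u) [AddCommGroup A] [Module R A] [IsArtinian R A] :
    {p : Ideal R | Minimal (· ∈ attachedPrimes R A) p} =
      (Module.annihilator R A).minimalPrimes ∧
    (Nontrivial A ↔ (attachedPrimes R A).Nonempty) := by
  constructor
  · ext p
    simp only [Set.mem_setOf_eq]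
    constructor
    · intro hmin
      have hp := hmin.1
      have hprime : p.IsPrime := hp.1
      have hIle := annihilator_le_of_attached hp
      haveI := hprime
      obtain ⟨q, hq, hqle⟩ := Ideal.exists_minimalPrimes_le hIle
      have hqatt := mem_attached_of_minimalPrime hq
      have hpq : p ≤ q := hmin.2 hqatt hqle
      rwa [le_antisymm hpq hqle]
    · intro hq
      refine ⟨mem_attached_of_minimalPrime hq, ?_⟩
      intro q hqatt hqle
      exact hq.2 ⟨hqatt.1, annihilator_le_of_attached hqatt⟩ hqle
  · constructor
    · intro hA
      have hne : Module.annihilator R A ≠ ⊤ := by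
        intro h
        obtain ⟨a₁, a₂, ha⟩ := hA
        apply ha
        have h1 : (1 : R) ∈ Module.annihilator R A := h ▸ Submodule.mem_top
        rw [Module.mem_annihilator] at h1
        calc a₁ = (1 : R) • a₁ := (one_smul R a₁).symm
        _ = 0 := h1 a₁
        _ = (1 : R) • a₂ := (h1 a₂).symm
        _ = a₂ := one_smul R a₂
      obtain ⟨m, hm1, hm2⟩ := Ideal.exists_le_maximal _ hne
      haveI := hm1.isPrime
      obtain ⟨q, hq, _⟩ := Ideal.exists_minimalPrimes_le hm2
      exact ⟨q, mem_attached_of_minimalPrime hq⟩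
    · rintro ⟨p, hp⟩
      exact nontrivial_of_attached hp
end

section
/- Let (R,m) be a Noetherian local ring with m-adic completion R-hat, and A an Artinian R-module. Then A carries a natural structure of Artinian R-hat-module, and the attached primes of A over R are exactly the contractions to R of the attached primes of A over R-hat. -/
universe u

noncomputable section Aux

section General
variable {R : Type*} [CommRing R] {M : Type*} [AddCommGroup M] [Module R M]

theorem surj_pow_smul {r : R} (h : Function.Surjective (fun m : M => r • m)) (n : ℕ) :
    Function.Surjective (fun m : M => r ^ n • m) := by
  induction n with
  | zero => exact fun m => ⟨m, by simp⟩
  | succ k ih =>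
      intro m
      obtain ⟨m', hm'⟩ := h m
      obtain ⟨m'', hm''⟩ := ih m'
      exact ⟨m'', by simp only [pow_succ, mul_comm, mul_smul, hm'', hm']⟩

theorem secondary_radical_isPrime (hnt : Nontrivial M)
    (h : ∀ r : R, Function.Surjective (fun m : M => r • m) ∨
      r ∈ (Module.annihilator R M).radical) :
    ((Module.annihilator R M).radical).IsPrime := by
  constructor
  · intro htop
    rw [Ideal.radical_eq_top] at htop
    obtain ⟨m, m', hmm⟩ := hnt
    exact hmm (by
      have h1 := Module.mem_annihilator.mp (htop ▸ Submodule.mem_top : (1:R) ∈ Module.annihilator R M)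
      rw [← one_smul R m, ← one_smul R m', h1, h1])
  · intro x y hxy
    by_cases hx : x ∈ (Module.annihilator R M).radical
    · exact Or.inl hx
    · right
      rcases h x with hsurj | hmem
      · obtain ⟨n, hn⟩ := hxy
        refine ⟨n, Module.mem_annihilator.mpr fun m => ?_⟩
        obtain ⟨m', hm'⟩ := surj_pow_smul hsurj n m
        have h0 := Module.mem_annihilator.mp hn m'
        simp only at hm'
        calc y ^ n • m = y ^ n • (x ^ n • m') := by rw [hm']
          _ = (x * y) ^ n • m' := by rw [mul_pow, mul_smul, smul_comm]
          _ = 0 := h0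
      · exact absurd hmem hx

theorem IsSecondary.isPrime {p : Ideal R} (h : IsSecondary R M p) : p.IsPrime := by
  obtain ⟨hnt, rfl, h3⟩ := h
  exact secondary_radical_isPrime hnt h3

theorem IsSecondary.of_surjective {M' : Type*} [AddCommGroup M'] [Module R M']
    {p : Ideal R} (h : IsSecondary R M p) (g : M →ₗ[R] M') (hg : Function.Surjective g)
    (hnt : Nontrivial M') : IsSecondary R M' p := by
  obtain ⟨hntM, hp, h3⟩ := h
  have hann : Module.annihilator R M ≤ Module.annihilator R M' :=
    g.annihilator_le_of_surjective hg
  have hsurj : ∀ r : R, Function.Surjective (fun m : M => r • m) →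
      Function.Surjective (fun m : M' => r • m) := by
    intro r hr m'
    obtain ⟨m, rfl⟩ := hg m'
    obtain ⟨x, hx⟩ := hr m
    exact ⟨g x, by simp only [← map_smul, hx]⟩
  have h3' : ∀ r : R, Function.Surjective (fun m : M' => r • m) ∨
      r ∈ (Module.annihilator R M').radical := by
    intro r
    rcases h3 r with hr | hr
    · exact Or.inl (hsurj r hr)
    · exact Or.inr (Ideal.radical_mono hann hr)
  refine ⟨hnt, le_antisymm ?_ ?_, h3'⟩
  · exact hp ▸ Ideal.radical_mono hann
  · -- radical ann M' ≤ p
    intro r hr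
    by_contra hrp
    rcases h3 r with hsurj' | hmem
    · obtain ⟨n, hn⟩ := hr
      have : Function.Surjective (fun m : M' => r ^ n • m) := surj_pow_smul (hsurj r hsurj') n
      obtain ⟨m, m', hmm⟩ := hnt
      apply hmm
      obtain ⟨x, hx⟩ := this m
      obtain ⟨x', hx'⟩ := this m'
      simp only at hx hx'
      rw [← hx, ← hx', Module.mem_annihilator.mp hn, Module.mem_annihilator.mp hn]
    · exact hrp (hp ▸ hmem)

theorem IsSecondary.of_equiv {M' : Type*} [AddCommGroup M'] [Module R M']
    {p : Ideal R} (h : IsSecondary R M p) (e : M ≃ₗ[R] M') : IsSecondary R M' p :=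
  h.of_surjective e.toLinearMap e.surjective (letI := h.1; e.symm.toEquiv.nontrivial)

end General

section B
variable {R : Type*} [CommRing R] {M : Type*} [AddCommGroup M] [Module R M]

theorem supirr_aux [IsArtinian R M] (N : Submodule R M) (hbot : N ≠ ⊥)
    (hirr : ∀ N₁ N₂ : Submodule R M, N₁ < N → N₂ < N → N₁ ⊔ N₂ ≠ N) (r : R) :
    Function.Surjective (fun m : N => r • m) ∨ r ∈ (Module.annihilator R (↥N)).radical := by
  classical
  set D : ℕ → Submodule R M := fun n => N.map ((r ^ n) • (LinearMap.id : M →ₗ[R] M)) with hD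
  have hDle : ∀ n, D n ≤ N := by
    rintro n x ⟨y, hy, rfl⟩
    exact N.smul_mem _ hy
  have hDmono : ∀ {m n : ℕ}, m ≤ n → D n ≤ D m := by
    rintro m n hmn x ⟨y, hy, rfl⟩
    refine ⟨r ^ (n - m) • y, N.smul_mem _ hy, ?_⟩
    simp only [LinearMap.smul_apply, LinearMap.id_apply, ← mul_smul, ← pow_add]
    rw [add_comm, Nat.sub_add_cancel hmn]
  obtain ⟨n₀, hn₀⟩ := IsArtinian.monotone_stabilizes (R := R) (M := M)
    ⟨fun n => OrderDual.toDual (D n), fun a b hab => hDmono hab⟩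
  set n := n₀ + 1 with hn
  have hstab : D n = D (n + n) := by
    have h1 := hn₀ n (by omega)
    have h2 := hn₀ (n + n) (by omega)
    exact h1.symm.trans h2
  have hdecomp : D n ⊔ (N ⊓ LinearMap.ker ((r ^ n) • (LinearMap.id : M →ₗ[R] M))) = N := by
    refine le_antisymm (sup_le (hDle n) inf_le_left) ?_
    intro x hx
    have hrx : r ^ n • x ∈ D (n + n) := hstab ▸ ⟨x, hx, rfl⟩
    obtain ⟨y, hy, hxy⟩ := hrx
    simp only [LinearMap.smul_apply, LinearMap.id_apply] at hxy
    have hz : r ^ n • y ∈ D n := ⟨y, hy, rfl⟩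
    have hx2 : x - r ^ n • y ∈ N ⊓ LinearMap.ker ((r ^ n) • (LinearMap.id : M →ₗ[R] M)) := by
      refine ⟨N.sub_mem hx (hDle n hz), ?_⟩
      show r ^ n • (x - r ^ n • y) = 0
      rw [smul_sub, ← mul_smul, ← pow_add, ← hxy, sub_self]
    have hxe : x = r ^ n • y + (x - r ^ n • y) := by abel
    rw [hxe]
    exact Submodule.add_mem _ (Submodule.mem_sup_left hz) (Submodule.mem_sup_right hx2)
  by_cases hcase : D n = N
  · left
    rintro ⟨y, hy⟩
    have : y ∈ D n := hcase ▸ hy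
    obtain ⟨x, hx, hxy⟩ := this
    simp only [LinearMap.smul_apply, LinearMap.id_apply] at hxy
    refine ⟨⟨r ^ n₀ • x, N.smul_mem _ hx⟩, ?_⟩
    apply Subtype.ext
    show r • r ^ n₀ • x = y
    rw [← mul_smul, ← pow_succ', hxy]
  · right
    have hker : N ⊓ LinearMap.ker ((r ^ n) • (LinearMap.id : M →ₗ[R] M)) = N := by
      by_contra hk
      exact hirr _ _ (lt_of_le_of_ne (hDle n) hcase)
        (lt_of_le_of_ne inf_le_left hk) hdecomp
    refine ⟨n, Module.mem_annihilator.mpr fun x => ?_⟩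
    have hx : (x : M) ∈ N ⊓ LinearMap.ker ((r ^ n) • (LinearMap.id : M →ₗ[R] M)) := by
      rw [hker]; exact x.2
    have := hx.2
    replace this : r ^ n • (x : M) = 0 := this
    exact Subtype.ext this

end B

section C
variable {R : Type*} [CommRing R] {M : Type*} [AddCommGroup M] [Module R M]

theorem exists_secondary_rep [IsArtinian R M] :
    ∃ s : Finset (Submodule R M), (∀ J ∈ s, ∃ P : Ideal R, IsSecondary R J P) ∧
      s.sup id = ⊤ := by
  classical
  suffices h : ∀ N : Submodule R M, ∃ s : Finset (Submodule R M),
      (∀ J ∈ s, ∃ P : Ideal R, IsSecondary R J P) ∧ s.sup id = N from h ⊤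
  intro N
  induction N using WellFoundedLT.induction with
  | ind N IH =>
  by_cases hbot : N = ⊥
  · exact ⟨∅, by simp, by simp [hbot]⟩
  by_cases hirr : ∀ N₁ N₂ : Submodule R M, N₁ < N → N₂ < N → N₁ ⊔ N₂ ≠ N
  · refine ⟨{N}, ?_, by simp⟩
    intro J hJ
    rw [Finset.mem_singleton.mp hJ]
    exact ⟨_, Submodule.nontrivial_iff_ne_bot.mpr hbot, rfl, supirr_aux N hbot hirr⟩
  · push_neg at hirr
    obtain ⟨N₁, N₂, h1, h2, hsup⟩ := hirr
    obtain ⟨s₁, hs₁, hsup₁⟩ := IH N₁ h1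
    obtain ⟨s₂, hs₂, hsup₂⟩ := IH N₂ h2
    refine ⟨s₁ ∪ s₂, ?_, ?_⟩
    · intro J hJ
      rcases Finset.mem_union.mp hJ with h | h
      exacts [hs₁ J h, hs₂ J h]
    · rw [Finset.sup_union, hsup₁, hsup₂, hsup]

end C

section D
variable {R S M : Type*} [CommRing R] [CommRing S] [Algebra R S]
  [AddCommGroup M] [Module S M] [Module R M] [IsScalarTower R S M]

theorem annihilator_restrict :
    Module.annihilator R M = (Module.annihilator S M).comap (algebraMap R S) := by
  ext r
  simp only [Module.mem_annihilator, Ideal.mem_comap, algebraMap_smul]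

theorem IsSecondary.restrictScalars' {P : Ideal S} (h : IsSecondary S M P) :
    IsSecondary R M (P.comap (algebraMap R S)) := by
  obtain ⟨hnt, hP, h3⟩ := h
  refine ⟨hnt, ?_, ?_⟩
  · rw [hP, Ideal.comap_radical, ← annihilator_restrict]
  · intro r
    rcases h3 (algebraMap R S r) with hs | hm
    · left
      have : (fun m : M => r • m) = fun m : M => (algebraMap R S r) • m := by
        funext m; rw [algebraMap_smul]
      rw [this]; exact hs
    · right
      rw [annihilator_restrict (R := R) (S := S) (M := M), ← Ideal.comap_radical]
      exact hm
end D

section E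
variable {R S M : Type*} [CommRing R] [CommRing S] [Algebra R S]
  [AddCommGroup M] [Module S M] [Module R M] [IsScalarTower R S M]

theorem exists_secondary_quotient_over [IsArtinian S M]
    {p : Ideal R} (hsec : IsSecondary R M p) :
    ∃ (K : Submodule S M) (P : Ideal S), IsSecondary S (M ⧸ K) P ∧
      P.comap (algebraMap R S) = p := by
  classical
  obtain ⟨s, hs, hstop⟩ := exists_secondary_rep (R := S) (M := M)
  revert hs hstop
  induction s using Finset.strongInduction with
  | _ t IH =>
  intro ht htop
  by_cases hmin : ∃ J ∈ t, (t.erase J).sup id = ⊤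
  · obtain ⟨J, hJ, hJtop⟩ := hmin
    exact IH (t.erase J) (Finset.erase_ssubset hJ)
      (fun J' hJ' => ht J' (Finset.mem_of_mem_erase hJ')) hJtop
  push_neg at hmin
  have hntM : Nontrivial M := hsec.1
  choose P hP using fun (J : {J // J ∈ t}) => ht J.1 J.2
  set q : {J // J ∈ t} → Ideal R := fun J => (P J).comap (algebraMap R S) with hq
  have hqsec : ∀ J, IsSecondary R (↥(J.1 : Submodule S M)) (q J) :=
    fun J => (hP J).restrictScalars'
  -- p is contained in every q J
  have hple : ∀ J, p ≤ q J := by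
    intro J r hr
    rw [hsec.2.1] at hr
    obtain ⟨n, hn⟩ := hr
    rw [(hqsec J).2.1]
    exact ⟨n, Module.mem_annihilator.mpr fun x => Subtype.ext
      (by simpa using Module.mem_annihilator.mp hn (x : M))⟩
  -- the infimum of the q J is contained in p
  have hinfle : (Finset.univ.inf q : Ideal R) ≤ p := by
    intro r hr
    have hrJ : ∀ J : {J // J ∈ t}, r ∈ q J := fun J =>
      (Finset.inf_le (Finset.mem_univ J) : Finset.univ.inf q ≤ q J) hr
    have hex : ∀ J : {J // J ∈ t}, ∃ n : ℕ, r ^ n ∈ Module.annihilator R (↥(J.1 : Submodule S M)) := by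
      intro J
      have := hrJ J
      rw [(hqsec J).2.1] at this
      exact this
    choose n hn using hex
    set N : ℕ := Finset.univ.sup n with hN
    rw [hsec.2.1]
    refine ⟨N, Module.mem_annihilator.mpr fun m => ?_⟩
    have hm : m ∈ (⨆ J : {J // J ∈ t}, (J.1 : Submodule S M)) := by
      have he : (⨆ J : {J // J ∈ t}, (J.1 : Submodule S M)) = ⊤ := by
        rw [← htop, Finset.sup_id_eq_sSup, sSup_eq_iSup']
        rfl
      rw [he]; exact Submodule.mem_top
    refine Submodule.iSup_induction (motive := fun x => r ^ N • x = 0) _ hm ?_ ?_ ?_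
    · intro J x hx
      have h1 : r ^ (n J) • x = 0 := by
        have := Module.mem_annihilator.mp (hn J) ⟨x, hx⟩
        simpa [Subtype.ext_iff] using this
      calc r ^ N • x = r ^ (N - n J) • (r ^ (n J) • x) := by
            rw [← mul_smul, ← pow_add, Nat.sub_add_cancel (Finset.le_sup (Finset.mem_univ J))]
        _ = 0 := by rw [h1, smul_zero]
    · exact smul_zero _
    · intro x y hx hy
      rw [smul_add, hx, hy, add_zero]
  -- find j with q j = p
  have hprod : (Finset.univ.prod q : Ideal R) ≤ p :=
    le_trans Ideal.prod_le_inf hinfle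
  obtain ⟨j, -, hjle⟩ := (Ideal.IsPrime.prod_le hsec.isPrime).mp hprod
  have hqj : q j = p := le_antisymm hjle (hple j)
  -- build the quotient
  set K : Submodule S M := (t.erase j.1).sup id with hK
  have hKne : K ≠ ⊤ := hmin j.1 j.2
  have hsupK : (j.1 : Submodule S M) ⊔ K = ⊤ := by
    have h2 := htop
    rw [← Finset.insert_erase j.2, Finset.sup_insert] at h2
    exact h2
  have hntQ : Nontrivial (M ⧸ K) :=
    Submodule.Quotient.nontrivial_iff.mpr hKne
  set g : (↥(j.1 : Submodule S M)) →ₗ[S] M ⧸ K := K.mkQ.comp (Submodule.subtype _) with hg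
  have hgsurj : Function.Surjective g := by
    intro y
    obtain ⟨m, rfl⟩ := Submodule.mkQ_surjective K y
    have : m ∈ (j.1 : Submodule S M) ⊔ K := hsupK ▸ Submodule.mem_top
    obtain ⟨a, ha, b, hb, rfl⟩ := Submodule.mem_sup.mp this
    refine ⟨⟨a, ha⟩, ?_⟩
    simp only [hg, LinearMap.comp_apply, Submodule.subtype_apply, Submodule.mkQ_apply]
    rw [Submodule.Quotient.mk_add, (Submodule.Quotient.mk_eq_zero K).mpr hb, add_zero]
  exact ⟨K, P j, (hP j).of_surjective g hgsurj hntQ, hqj⟩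

end E

section F
variable (R : Type u) [CommRing R] [IsNoetherianRing R] [IsLocalRing R]
variable (A : Type u) [AddCommGroup A] [Module R A] [IsArtinian R A]

local notation "I" => IsLocalRing.maximalIdeal R

theorem artinian_pow_smul_eq_zero (a : A) :
    ∃ n : ℕ, ∀ c ∈ (I ^ n : Ideal R), c • a = 0 := by
  set C : Submodule R A := Submodule.span R {a} with hC
  obtain ⟨n₀, hn₀⟩ := IsArtinian.monotone_stabilizes (R := R) (M := A)
    ⟨fun n => OrderDual.toDual ((I ^ n : Ideal R) • C), by
      intro m n hmn
      exact Submodule.smul_mono_left (Ideal.pow_le_pow_right hmn)⟩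
  have hstep : (I ^ n₀ : Ideal R) • C = (I ^ (n₀ + 1) : Ideal R) • C := by
    exact hn₀ (n₀ + 1) (by omega)
  have hle : (I ^ n₀ : Ideal R) • C ≤ (I : Ideal R) • ((I ^ n₀ : Ideal R) • C) := by
    rw [← Submodule.smul_assoc, Ideal.smul_eq_mul, ← pow_succ']
    exact le_of_eq hstep
  have hCfg : C.FG := Submodule.fg_span_singleton a
  haveI hCnoe : IsNoetherian R ↥C := isNoetherian_of_fg_of_noetherian C hCfg
  have hEle : (I ^ n₀ : Ideal R) • C ≤ C :=
    Submodule.smul_le.mpr fun r _ x hx => C.smul_mem r hx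
  have hEfg : ((I ^ n₀ : Ideal R) • C).FG := by
    have h1 := IsNoetherian.noetherian (((I ^ n₀ : Ideal R) • C).comap C.subtype)
    have h2 := h1.map C.subtype
    rwa [Submodule.map_comap_subtype, inf_eq_right.mpr hEle] at h2
  have hbot : (I ^ n₀ : Ideal R) • C = ⊥ :=
    Submodule.eq_bot_of_le_smul_of_le_jacobson_bot (I : Ideal R) _ hEfg hle
      (by rw [IsLocalRing.jacobson_eq_maximalIdeal ⊥ bot_ne_top])
  refine ⟨n₀, fun c hc => ?_⟩
  have : c • a ∈ (I ^ n₀ : Ideal R) • C :=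
    Submodule.smul_mem_smul hc (Submodule.mem_span_singleton_self a)
  rwa [hbot, Submodule.mem_bot] at this

/-- The torsion exponent of `a`. -/
def tExp (a : A) : ℕ := (artinian_pow_smul_eq_zero R A a).choose

theorem tExp_spec (a : A) : ∀ c ∈ (I ^ (tExp R A a) : Ideal R), c • a = 0 :=
  (artinian_pow_smul_eq_zero R A a).choose_spec

/-- The scalar multiplication of the completion on an Artinian module. -/
def cSMul (x : completionRing R) (a : A) : A :=
  (Quotient.out (AdicCompletion.evalₐ (I) (tExp R A a) x)) • a

theorem mk_out' {n : ℕ} (y : R ⧸ (I ^ n : Ideal R)) :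
    Ideal.Quotient.mk (I ^ n : Ideal R) (Quotient.out y) = y :=
  Quotient.out_eq y

theorem cSMul_eq (x : completionRing R) (a : A) {n : ℕ} {r : R}
    (hk : ∀ c ∈ (I ^ n : Ideal R), c • a = 0)
    (hr : AdicCompletion.evalₐ (I) n x = Ideal.Quotient.mk _ r) :
    cSMul R A x a = r • a := by
  induction x using AdicCompletion.induction_on with
  | h f =>
  set n₀ := tExp R A (a) with hn₀
  have hk₀ := tExp_spec R A a
  set rr := Quotient.out (AdicCompletion.evalₐ (I) n₀ (AdicCompletion.mk (I) R f)) with hrr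
  have h1 : Ideal.Quotient.mk (I ^ n₀ : Ideal R) rr =
      Ideal.Quotient.mk (I ^ n₀ : Ideal R) (f.val n₀) := by
    rw [hrr, mk_out', AdicCompletion.evalₐ_mk]
  rw [AdicCompletion.evalₐ_mk] at hr
  set MN := max n n₀ with hMN
  have h2 : Ideal.Quotient.mk (I ^ n₀ : Ideal R) (f.val MN) =
      Ideal.Quotient.mk (I ^ n₀ : Ideal R) (f.val n₀) :=
    AdicCompletion.Ideal.mk_eq_mk (I) (le_max_right n n₀) f
  have h3 : Ideal.Quotient.mk (I ^ n : Ideal R) (f.val MN) =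
      Ideal.Quotient.mk (I ^ n : Ideal R) (f.val n) :=
    AdicCompletion.Ideal.mk_eq_mk (I) (le_max_left n n₀) f
  have e1 : rr • a = f.val MN • a := by
    have hmem : rr - f.val MN ∈ (I ^ n₀ : Ideal R) := by
      rw [← Ideal.Quotient.eq, h1, h2]
    have := hk₀ _ hmem
    rwa [sub_smul, sub_eq_zero] at this
  have e2 : f.val MN • a = r • a := by
    have hmem : f.val MN - r ∈ (I ^ n : Ideal R) := by
      rw [← Ideal.Quotient.eq, h3, hr]
    have := hk _ hmem
    rwa [sub_smul, sub_eq_zero] at this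
  show rr • a = r • a
  rw [e1, e2]

theorem cSMul_exists_rep (x : completionRing R) (a : A) :
    ∃ r : R, cSMul R A x a = r • a :=
  ⟨_, rfl⟩

theorem kills_mono {a : A} {n m : ℕ} (h : ∀ c ∈ (I ^ n : Ideal R), c • a = 0) (hnm : n ≤ m) :
    ∀ c ∈ (I ^ m : Ideal R), c • a = 0 :=
  fun c hc => h c (Ideal.pow_le_pow_right hnm hc)

/-- The module structure of the completion on an Artinian module. -/
def cModule : Module (completionRing R) A where
  smul := cSMul R A
  one_smul a := by
    show cSMul R A 1 a = a
    rw [cSMul_eq R A 1 a (tExp_spec R A a) (by rw [map_one, map_one]), one_smul]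
  mul_smul x y a := by
    show cSMul R A (x * y) a = cSMul R A x (cSMul R A y a)
    set n := tExp R A a with hn
    have hka := tExp_spec R A a
    set r : R := Quotient.out (AdicCompletion.evalₐ (I) n x) with hr
    set s : R := Quotient.out (AdicCompletion.evalₐ (I) n y) with hs
    have hys : cSMul R A y a = s • a := cSMul_eq R A y a hka (mk_out' R _).symm
    have hksa : ∀ c ∈ (I ^ n : Ideal R), c • (s • a) = 0 := fun c hc => by
      rw [smul_comm, hka c hc, smul_zero]
    have hx : cSMul R A x (cSMul R A y a) = r • (s • a) := by
      rw [hys]; exact cSMul_eq R A x (s • a) hksa (mk_out' R _).symm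
    have hxy : cSMul R A (x * y) a = (r * s) • a := by
      refine cSMul_eq R A (x * y) a hka ?_
      rw [map_mul, map_mul, mk_out', mk_out']
    rw [hxy, hx, mul_smul]
  smul_zero x := by
    show cSMul R A x 0 = 0
    rw [cSMul_eq R A x 0 (n := tExp R A (0 : A)) (fun c _ => smul_zero c)
      (mk_out' R _).symm, smul_zero]
  smul_add x a b := by
    show cSMul R A x (a + b) = cSMul R A x a + cSMul R A x b
    set n := max (tExp R A a) (tExp R A b) with hn
    have hka := kills_mono R A (tExp_spec R A a) (le_max_left (tExp R A a) (tExp R A b))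
    have hkb := kills_mono R A (tExp_spec R A b) (le_max_right (tExp R A a) (tExp R A b))
    have hkab : ∀ c ∈ (I ^ n : Ideal R), c • (a + b) = 0 := fun c hc => by
      rw [smul_add, hka c hc, hkb c hc, add_zero]
    rw [cSMul_eq R A x (a + b) hkab (mk_out' R _).symm,
      cSMul_eq R A x a hka (mk_out' R _).symm,
      cSMul_eq R A x b hkb (mk_out' R _).symm, smul_add]
  add_smul x y a := by
    show cSMul R A (x + y) a = cSMul R A x a + cSMul R A y a
    set n := tExp R A a with hn
    have hka := tExp_spec R A a
    rw [cSMul_eq R A (x + y) a hka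
        (r := Quotient.out (AdicCompletion.evalₐ (I) n x) +
          Quotient.out (AdicCompletion.evalₐ (I) n y))
        (by rw [map_add, map_add, mk_out', mk_out']),
      cSMul_eq R A x a hka (mk_out' R _).symm,
      cSMul_eq R A y a hka (mk_out' R _).symm, add_smul]
  zero_smul a := by
    show cSMul R A 0 a = 0
    rw [cSMul_eq R A 0 a (tExp_spec R A a) (by rw [map_zero, map_zero]), zero_smul]

theorem cSMul_algebraMap (r : R) (a : A) :
    cSMul R A (algebraMap R (completionRing R) r) a = r • a := by
  refine cSMul_eq R A _ a (tExp_spec R A a) ?_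
  rw [AlgHom.commutes]
  rfl

end F

end Aux

theorem artinian_module_completion_structure_and_attachedPrimes
    (R : Type u) [CommRing R] [IsNoetherianRing R] [IsLocalRing R]
    (A : Type u) [AddCommGroup A] [Module R A] [IsArtinian R A] :
    ∃ inst : Module (completionRing R) A,
      (letI := inst;
        ∀ (r : R) (a : A), (algebraMap R (completionRing R) r) • a = r • a) ∧
      (letI := inst;
        IsArtinian (completionRing R) A) ∧
      (letI := inst;
        attachedPrimes R A =
          (fun P => P.comap (algebraMap R (completionRing R))) ''
            attachedPrimes (completionRing R) A) := by
  classical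
  letI inst : Module (completionRing R) A := cModule R A
  haveI htower : IsScalarTower R (completionRing R) A := by
    refine ⟨fun r x a => ?_⟩
    have h1 : r • x = algebraMap R (completionRing R) r * x := Algebra.smul_def r x
    rw [h1]
    have h2 : (algebraMap R (completionRing R) r * x) • a =
        (algebraMap R (completionRing R) r) • (x • a) := mul_smul _ _ _
    rw [h2]
    show cSMul R A (algebraMap R (completionRing R) r) (x • a) = r • (x • a)
    exact cSMul_algebraMap R A r (x • a)
  haveI hart : IsArtinian (completionRing R) A := isArtinian_of_tower R inferInstance
  refine ⟨inst, fun r a => cSMul_algebraMap R A r a, hart, ?_⟩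
  ext p
  constructor
  · rintro ⟨hp, N, hsec⟩
    set N' : Submodule (completionRing R) A :=
      { carrier := N
        add_mem' := fun h1 h2 => N.add_mem h1 h2
        zero_mem' := N.zero_mem
        smul_mem' := fun x a ha => by
          obtain ⟨r, hr⟩ := cSMul_exists_rep R A x a
          show cSMul R A x a ∈ N
          rw [hr]
          exact N.smul_mem r ha } with hN'
    have e1 : (A ⧸ N) ≃ₗ[R] (A ⧸ N') := Submodule.Quotient.restrictScalarsEquiv R N'
    have hsec' : IsSecondary R (A ⧸ N') p := hsec.of_equiv e1
    obtain ⟨K, P, hsecK, hcomap⟩ :=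
      exists_secondary_quotient_over (S := completionRing R) (M := A ⧸ N') hsec'
    set K' : Submodule (completionRing R) A := K.comap N'.mkQ with hK'
    have hle : N' ≤ K' := by
      intro a ha
      rw [hK', Submodule.mem_comap, Submodule.mkQ_apply]
      have : (Submodule.Quotient.mk a : A ⧸ N') = 0 :=
        (Submodule.Quotient.mk_eq_zero N').mpr ha
      rw [this]
      exact K.zero_mem
    have hmap : K'.map N'.mkQ = K :=
      Submodule.map_comap_eq_of_surjective (Submodule.mkQ_surjective N') K
    have e2 : ((A ⧸ N') ⧸ K'.map N'.mkQ) ≃ₗ[completionRing R] (A ⧸ K') :=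
      Submodule.quotientQuotientEquivQuotient N' K' hle
    rw [← hmap] at hsecK
    have hsecK' : IsSecondary (completionRing R) (A ⧸ K') P := hsecK.of_equiv e2
    exact ⟨P, ⟨hsecK'.isPrime, K', hsecK'⟩, hcomap⟩
  · rintro ⟨P, ⟨hP, N, hsecN⟩, rfl⟩
    refine ⟨hP.comap (algebraMap R (completionRing R)), N.restrictScalars R, ?_⟩
    have e : (A ⧸ N) ≃ₗ[R] (A ⧸ N.restrictScalars R) :=
      (Submodule.Quotient.restrictScalarsEquiv R N).symm
    exact (hsecN.restrictScalars' (R := R)).of_equiv e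
end
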